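/- Let (X_n)_{n≥1} be a sequence of random variables adapted to a filtration (F_n)_{n≥0} with 0 ≤ X_n ≤ B almost surely for some constant B > 0. Then for every n ≥ 1, E[exp((1/B)·∑_{i=1}^n ((1/2)·E[X_i | F_{i−1}] − X_i))] ≤ 1. -/

import Mathlib

open MeasureTheory ProbabilityTheory Finset

lemma exp_neg_le_aux {B x : ℝ} (hB : 0 < B) (h0 : 0 ≤ x) (h1 : x ≤ B) :
    Real.exp (-(1 / B) * x) ≤ 1 - 1 / (2 * B) * x := by
  have ht0 : 0 ≤ x / B := div_nonneg h0 hB.le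
  have ht1 : x / B ≤ 1 := (div_le_one hB).2 h1
  have key : Real.exp (-(x / B)) ≤ 1 - x / B / 2 := by
    have e1 : x / B + 1 ≤ Real.exp (x / B) := Real.add_one_le_exp _
    have e2 : Real.exp (-(x / B)) * Real.exp (x / B) = 1 := by
      rw [← Real.exp_add]; simp
    nlinarith [Real.exp_pos (-(x / B)), Real.exp_pos (x / B),
      mul_nonneg ht0 (sub_nonneg.2 ht1),
      mul_le_mul_of_nonneg_left e1 (Real.exp_pos (-(x / B))).le]
  have l1 : -(1 / B) * x = -(x / B) := by ring
  have l2 : (1 : ℝ) - 1 / (2 * B) * x = 1 - x / B / 2 := by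
    field_simp
  rw [l1, l2]
  exact key

/-- For an adapted sequence `(X n)` with `0 ≤ X n ≤ B` almost surely, for every `n ≥ 1`,
`E[exp((1/B) ∑_{i=1}^n ((1/2) E[X i | ℱ (i-1)] - X i))] ≤ 1`. -/
theorem integral_exp_sum_le_one
    {Ω : Type*} {m0 : MeasurableSpace Ω} {μ : Measure Ω} [IsProbabilityMeasure μ]
    (ℱ : Filtration ℕ m0) (X : ℕ → Ω → ℝ) (B : ℝ) (hB : 0 < B)
    (hadp : ∀ n, 1 ≤ n → StronglyMeasurable[ℱ n] (X n))
    (hbdd : ∀ n, 1 ≤ n → ∀ᵐ ω ∂μ, X n ω ∈ Set.Icc (0 : ℝ) B)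
    (n : ℕ) (hn : 1 ≤ n) :
    ∫ ω, Real.exp ((1 / B) *
        ∑ i ∈ Finset.Icc 1 n, ((1 / 2) * (μ[X i | ℱ (i - 1)]) ω - X i ω)) ∂μ ≤ 1 := by
  have hle : ∀ i : ℕ, ℱ i ≤ m0 := fun i => ℱ.le i
  -- integrability of X i
  have hXint : ∀ i, 1 ≤ i → Integrable (X i) μ := by
    intro i hi
    refine Integrable.mono' (integrable_const B)
      (((hadp i hi).mono (hle i)).aestronglyMeasurable) ?_
    filter_upwards [hbdd i hi] with ω hω
    rw [Real.norm_eq_abs, abs_le]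
    exact ⟨by linarith [hω.1], hω.2⟩
  -- conditional expectations are in [0, B] a.e.
  have hm_bdd : ∀ i, 1 ≤ i → ∀ᵐ ω ∂μ, (μ[X i | ℱ (i - 1)]) ω ∈ Set.Icc (0 : ℝ) B := by
    intro i hi
    have h0 : 0 ≤ᵐ[μ] μ[X i | ℱ (i - 1)] :=
      condExp_nonneg (by filter_upwards [hbdd i hi] with ω hω using hω.1)
    have hup : μ[X i | ℱ (i - 1)] ≤ᵐ[μ] fun _ => B := by
      have h := condExp_mono (m := ℱ (i - 1)) (hXint i hi) (integrable_const B)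
        (by filter_upwards [hbdd i hi] with ω hω using hω.2)
      rwa [condExp_const (hle (i - 1)) B] at h
    filter_upwards [h0, hup] with ω h1 h2
    exact ⟨h1, h2⟩
  -- global a.e. bounds
  have hae : ∀ᵐ ω ∂μ, ∀ i, 1 ≤ i →
      X i ω ∈ Set.Icc (0 : ℝ) B ∧ (μ[X i | ℱ (i - 1)]) ω ∈ Set.Icc (0 : ℝ) B := by
    rw [ae_all_iff]
    intro i
    by_cases hi : 1 ≤ i
    · filter_upwards [hbdd i hi, hm_bdd i hi] with ω h1 h2
      exact fun _ => ⟨h1, h2⟩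
    · filter_upwards with ω h
      exact absurd h hi
  -- abbreviation for the exponent
  set G : ℕ → Ω → ℝ := fun N ω =>
    (1 / B) * ∑ i ∈ Finset.Icc 1 N, ((1 / 2) * (μ[X i | ℱ (i - 1)]) ω - X i ω) with hG
  -- measurability of exp ∘ G N w.r.t. ℱ N
  have hGmeas : ∀ N, StronglyMeasurable[ℱ N] (fun ω => G N ω) := by
    intro N
    simp only [hG]
    refine (Finset.stronglyMeasurable_fun_sum _ fun i hi => ?_).const_mul _
    obtain ⟨hi1, hiN⟩ := Finset.mem_Icc.mp hi
    exact ((stronglyMeasurable_condExp.mono (ℱ.mono ((Nat.sub_le i 1).trans hiN))).const_mul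
      _).sub ((hadp i hi1).mono (ℱ.mono hiN))
  -- a.e. bound on G N
  have hGbdd : ∀ N : ℕ, ∀ᵐ ω ∂μ, G N ω ≤ (N : ℝ) / 2 := by
    intro N
    filter_upwards [hae] with ω hω
    have hsum : ∑ i ∈ Finset.Icc 1 N, ((1 / 2) * (μ[X i | ℱ (i - 1)]) ω - X i ω)
        ≤ ∑ _i ∈ Finset.Icc 1 N, (B / 2) := by
      refine Finset.sum_le_sum fun i hi => ?_
      obtain ⟨hi1, _⟩ := Finset.mem_Icc.mp hi
      obtain ⟨hX, hM⟩ := hω i hi1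
      have := hM.2
      have := hX.1
      linarith
    rw [Finset.sum_const, Nat.card_Icc] at hsum
    simp only [Nat.add_sub_cancel, nsmul_eq_mul] at hsum
    have : G N ω ≤ (1 / B) * ((N : ℝ) * (B / 2)) := by
      rw [hG]
      exact mul_le_mul_of_nonneg_left hsum (by positivity)
    calc G N ω ≤ (1 / B) * ((N : ℝ) * (B / 2)) := this
      _ = (N : ℝ) / 2 := by field_simp
  -- integrability of exp ∘ G N
  have hGint : ∀ N : ℕ, Integrable (fun ω => Real.exp (G N ω)) μ := by
    intro N
    refine Integrable.mono' (integrable_const (Real.exp ((N : ℝ) / 2)))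
      ((Real.continuous_exp.comp_stronglyMeasurable
        ((hGmeas N).mono (hle N))).aestronglyMeasurable) ?_
    filter_upwards [hGbdd N] with ω hω
    rw [Real.norm_eq_abs, abs_of_pos (Real.exp_pos _)]
    exact Real.exp_le_exp.2 hω
  -- the key conditional-expectation bound
  have hkey : ∀ i, 1 ≤ i →
      μ[(fun ω => Real.exp (-(1 / B) * X i ω)) | ℱ (i - 1)] ≤ᵐ[μ]
        fun ω => Real.exp (-(1 / (2 * B) * (μ[X i | ℱ (i - 1)]) ω)) := by
    intro i hi
    have hh_meas : StronglyMeasurable (fun ω => Real.exp (-(1 / B) * X i ω)) :=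
      Real.continuous_exp.comp_stronglyMeasurable
        (((hadp i hi).mono (hle i)).const_mul _)
    have hh_int : Integrable (fun ω => Real.exp (-(1 / B) * X i ω)) μ := by
      refine Integrable.mono' (integrable_const 1) hh_meas.aestronglyMeasurable ?_
      filter_upwards [hbdd i hi] with ω hω
      rw [Real.norm_eq_abs, abs_of_pos (Real.exp_pos _)]
      calc Real.exp (-(1 / B) * X i ω) ≤ Real.exp 0 := by
            apply Real.exp_le_exp.2
            have := hω.1
            have hBpos : 0 < 1 / B := by positivity
            nlinarith
        _ = 1 := Real.exp_zero
    have hlin_int : Integrable (fun ω => 1 - 1 / (2 * B) * X i ω) μ := by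
      exact (integrable_const (1 : ℝ)).sub ((hXint i hi).const_mul _)
    have step2 : μ[(fun ω => Real.exp (-(1 / B) * X i ω)) | ℱ (i - 1)] ≤ᵐ[μ]
        μ[(fun ω => 1 - 1 / (2 * B) * X i ω) | ℱ (i - 1)] := by
      refine condExp_mono hh_int hlin_int ?_
      filter_upwards [hbdd i hi] with ω hω
      exact exp_neg_le_aux hB hω.1 hω.2
    have step3 : μ[(fun ω => 1 - 1 / (2 * B) * X i ω) | ℱ (i - 1)] =ᵐ[μ]
        fun ω => 1 - 1 / (2 * B) * (μ[X i | ℱ (i - 1)]) ω := by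
      have e1 : (fun ω => 1 - 1 / (2 * B) * X i ω)
          = (fun _ => (1 : ℝ)) - (1 / (2 * B)) • X i := by
        funext ω
        simp [smul_eq_mul]
      rw [e1]
      refine (condExp_sub (integrable_const 1) ((hXint i hi).smul _) _).trans ?_
      have e2 := condExp_smul (μ := μ) (m := ℱ (i - 1)) (1 / (2 * B)) (X i)
      have e3 : μ[(fun _ => (1 : ℝ)) | ℱ (i - 1)] = fun _ => (1 : ℝ) :=
        condExp_const (hle (i - 1)) 1
      filter_upwards [e2] with ω hω
      simp only [Pi.sub_apply, e3, Pi.smul_apply, smul_eq_mul] at hω ⊢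
      rw [hω]
    have step4 : (fun ω => 1 - 1 / (2 * B) * (μ[X i | ℱ (i - 1)]) ω) ≤ᵐ[μ]
        fun ω => Real.exp (-(1 / (2 * B) * (μ[X i | ℱ (i - 1)]) ω)) := by
      filter_upwards with ω
      have := Real.add_one_le_exp (-(1 / (2 * B) * (μ[X i | ℱ (i - 1)]) ω))
      linarith
    calc μ[(fun ω => Real.exp (-(1 / B) * X i ω)) | ℱ (i - 1)]
        ≤ᵐ[μ] μ[(fun ω => 1 - 1 / (2 * B) * X i ω) | ℱ (i - 1)] := step2
      _ ≤ᵐ[μ] fun ω => Real.exp (-(1 / (2 * B) * (μ[X i | ℱ (i - 1)]) ω)) :=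
          step3.trans_le step4
  -- main induction
  have main : ∀ N : ℕ, ∫ ω, Real.exp (G N ω) ∂μ ≤ 1 := by
    intro N
    induction N with
    | zero =>
      have : Finset.Icc 1 0 = (∅ : Finset ℕ) := by decide
      simp [hG, this]
    | succ N ih =>
      have hN1 : (1 : ℕ) ≤ N + 1 := Nat.succ_le_succ (Nat.zero_le N)
      set f : Ω → ℝ := fun ω =>
        Real.exp (G N ω + 1 / (2 * B) * (μ[X (N + 1) | ℱ N]) ω) with hf
      set h : Ω → ℝ := fun ω => Real.exp (-(1 / B) * X (N + 1) ω) with hh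
      have hNsub : (N + 1) - 1 = N := rfl
      have hsplit : ∀ ω, Real.exp (G (N + 1) ω) = f ω * h ω := by
        intro ω
        rw [hf, hh, ← Real.exp_add]
        congr 1
        simp only [hG]
        rw [Finset.sum_Icc_succ_top hN1, hNsub]
        ring
      -- f is ℱ N measurable and bounded
      have hf_meas : StronglyMeasurable[ℱ N] f := by
        rw [hf]
        refine Real.continuous_exp.comp_stronglyMeasurable ?_
        have : StronglyMeasurable[ℱ N] (μ[X (N + 1) | ℱ N]) := stronglyMeasurable_condExp
        exact (hGmeas N).add (this.const_mul _)
      have hf_bound : ∀ᵐ ω ∂μ, ‖f ω‖ ≤ Real.exp ((N : ℝ) / 2 + 1 / 2) := by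
        filter_upwards [hGbdd N, hae] with ω hω1 hω2
        rw [hf, Real.norm_eq_abs, abs_of_pos (Real.exp_pos _)]
        apply Real.exp_le_exp.2
        have hM := (hω2 (N + 1) hN1).2
        rw [hNsub] at hM
        have h1 : 1 / (2 * B) * (μ[X (N + 1) | ℱ N]) ω ≤ 1 / 2 := by
          rw [div_mul_eq_mul_div, one_mul]
          rw [div_le_div_iff₀ (by positivity) (by norm_num)]
          nlinarith [hM.2]
        linarith
      -- h is integrable
      have hh_meas : StronglyMeasurable h := by
        rw [hh]
        exact Real.continuous_exp.comp_stronglyMeasurable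
          (((hadp (N + 1) hN1).mono (hle (N + 1))).const_mul _)
      have hh_int : Integrable h μ := by
        refine Integrable.mono' (integrable_const 1) hh_meas.aestronglyMeasurable ?_
        filter_upwards [hbdd (N + 1) hN1] with ω hω
        rw [hh, Real.norm_eq_abs, abs_of_pos (Real.exp_pos _)]
        calc Real.exp (-(1 / B) * X (N + 1) ω) ≤ Real.exp 0 := by
              apply Real.exp_le_exp.2
              have := hω.1
              have hBpos : 0 < 1 / B := by positivity
              nlinarith
          _ = 1 := Real.exp_zero
      -- pull-out
      have pull : μ[(fun ω => f ω * h ω) | ℱ N] =ᵐ[μ] fun ω => f ω * (μ[h | ℱ N]) ω := by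
        have := condExp_stronglyMeasurable_mul_of_bound (hle N) hf_meas hh_int
          (Real.exp ((N : ℝ) / 2 + 1 / 2)) hf_bound
        filter_upwards [this] with ω hω
        exact hω
      -- integrability pieces
      have hf_aesm : AEStronglyMeasurable f μ :=
        (hf_meas.mono (hle N)).aestronglyMeasurable
      have hfh_int : Integrable (fun ω => f ω * h ω) μ :=
        hh_int.bdd_mul hf_aesm hf_bound
      have hfM_int : Integrable (fun ω => f ω * (μ[h | ℱ N]) ω) μ :=
        integrable_condExp.bdd_mul hf_aesm hf_bound
      -- the pointwise identity f * exp(-(c*m)) = exp (G N)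
      have hback : ∀ ω, f ω * Real.exp (-(1 / (2 * B) * (μ[X (N + 1) | ℱ N]) ω))
          = Real.exp (G N ω) := by
        intro ω
        rw [hf, ← Real.exp_add]
        congr 1
        ring
      have hkey' := hkey (N + 1) hN1
      rw [hNsub] at hkey'
      calc ∫ ω, Real.exp (G (N + 1) ω) ∂μ
          = ∫ ω, f ω * h ω ∂μ := by
            exact integral_congr_ae (Filter.Eventually.of_forall hsplit)
        _ = ∫ ω, (μ[(fun ω => f ω * h ω) | ℱ N]) ω ∂μ := (integral_condExp (hle N)).symm
        _ = ∫ ω, f ω * (μ[h | ℱ N]) ω ∂μ := integral_congr_ae pull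
        _ ≤ ∫ ω, f ω * Real.exp (-(1 / (2 * B) * (μ[X (N + 1) | ℱ N]) ω)) ∂μ := by
            refine integral_mono_ae hfM_int ?_ ?_
            · have : (fun ω => f ω * Real.exp (-(1 / (2 * B) * (μ[X (N + 1) | ℱ N]) ω)))
                  = fun ω => Real.exp (G N ω) := funext hback
              rw [this]
              exact hGint N
            · filter_upwards [hkey'] with ω hω
              exact mul_le_mul_of_nonneg_left hω (Real.exp_pos _).le
        _ = ∫ ω, Real.exp (G N ω) ∂μ := integral_congr_ae
              (Filter.Eventually.of_forall hback)
        _ ≤ 1 := ih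
  exact main n
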